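/- Let a < b be real numbers, let m be a natural number, and let f : ℝ → ℝ be (2m+2)-times continuously differentiable on [a,b]. Let P be a real polynomial of degree at most 2m+1 such that for every j with 0 ≤ j ≤ m, the j-th derivative of P at a equals the j-th derivative of f at a and the j-th derivative of P at b equals the j-th derivative of f at b (i.e., P is the two-point Hermite interpolant of f of order m at a and b). Then for every t ∈ (a,b) there exists ξ ∈ (a,b) such that f(t) − P(t) = (f^{(2m+2)}(ξ) / (2m+2)!) · (t−a)^{m+1} (t−b)^{m+1}. -/

import Mathlib

open Set Polynomial

private lemma contDiff_polyeval (q : Polynomial ℝ) (n : ℕ) :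
    ContDiff ℝ (n : ℕ) fun x : ℝ => q.eval x := by
  induction q using Polynomial.induction_on' with
  | add p q hp hq => simpa [eval_add] using hp.add hq
  | monomial k c => simpa [eval_monomial] using contDiff_const.mul (contDiff_id.pow k)

private lemma iterderiv_add (p q : Polynomial ℝ) (k : ℕ) :
    Polynomial.derivative^[k] (p + q)
      = Polynomial.derivative^[k] p + Polynomial.derivative^[k] q := by
  induction k with
  | zero => simp
  | succ k IH => simp [Function.iterate_succ_apply', IH]

private lemma polyIterDerivWithin (q : Polynomial ℝ) {s : Set ℝ} (hs : UniqueDiffOn ℝ s) :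
    ∀ (n : ℕ) {x : ℝ}, x ∈ s →
      iteratedDerivWithin n (fun y => q.eval y) s x
        = (Polynomial.derivative^[n] q).eval x := by
  intro n
  induction n generalizing q with
  | zero => intro x hx; simp
  | succ n IH =>
    intro x hx
    rw [iteratedDerivWithin_succ', Function.iterate_succ_apply,
      ← IH (derivative q) hx]
    exact iteratedDerivWithin_congr (fun y hy => q.derivWithin (hs y hy)) hx

private lemma polyIterDeriv (q : Polynomial ℝ) (n : ℕ) (x : ℝ) :
    iteratedDeriv n (fun y => q.eval y) x = (Polynomial.derivative^[n] q).eval x := by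
  rw [← iteratedDerivWithin_univ]
  exact polyIterDerivWithin q uniqueDiffOn_univ n (Set.mem_univ x)

private lemma rolle_tuple {a b : ℝ} {h h' : ℝ → ℝ}
    (hc : ContinuousOn h (Set.Icc a b))
    (hd : ∀ z ∈ Set.Ioo a b, deriv h z = h' z)
    {N : ℕ} (x : Fin (N + 1) → ℝ) (hmono : StrictMono x)
    (hmem : ∀ i, x i ∈ Set.Icc a b) (hzero : ∀ i, h (x i) = 0) :
    ∃ y : Fin N → ℝ, StrictMono y ∧ (∀ i, y i ∈ Set.Ioo a b) ∧ ∀ i, h' (y i) = 0 := by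
  have key : ∀ i : Fin N, ∃ c ∈ Set.Ioo (x i.castSucc) (x i.succ), deriv h c = 0 := by
    intro i
    have hlt : x i.castSucc < x i.succ := hmono Fin.castSucc_lt_succ
    exact exists_deriv_eq_zero hlt
      (hc.mono (Set.Icc_subset_Icc (hmem i.castSucc).1 (hmem i.succ).2))
      ((hzero i.castSucc).trans (hzero i.succ).symm)
  choose y hy1 hy2 using key
  have hyIoo : ∀ i, y i ∈ Set.Ioo a b := fun i =>
    ⟨lt_of_le_of_lt (hmem i.castSucc).1 (hy1 i).1,
     lt_of_lt_of_le (hy1 i).2 (hmem i.succ).2⟩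
  refine ⟨y, ?_, hyIoo, fun i => by rw [← hd _ (hyIoo i)]; exact hy2 i⟩
  intro i j hij
  have hij' : (i : ℕ) < j := hij
  calc y i < x i.succ := (hy1 i).2
    _ ≤ x j.castSucc := hmono.monotone (by
        rw [Fin.le_def]; simpa using hij')
    _ < y j := (hy1 j).1

private lemma rolle_insert {a b : ℝ} (hab : a < b) {h h' : ℝ → ℝ}
    (hc : ContinuousOn h (Set.Icc a b))
    (hd : ∀ z ∈ Set.Ioo a b, deriv h z = h' z)
    {N : ℕ} (x : Fin (N + 1) → ℝ) (hmono : StrictMono x)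
    (hmem : ∀ i, x i ∈ Set.Ioo a b) (hzero : ∀ i, h (x i) = 0)
    (ha0 : h a = 0) (hb0 : h b = 0) :
    ∃ y : Fin (N + 2) → ℝ, StrictMono y ∧ (∀ i, y i ∈ Set.Ioo a b) ∧
      ∀ i, h' (y i) = 0 := by
  set z : Fin (N + 3) → ℝ := fun i =>
    if h1 : (i : ℕ) = 0 then a else if h2 : (i : ℕ) = N + 2 then b
    else x ⟨(i : ℕ) - 1, by have := i.isLt; omega⟩ with hz
  have zA : ∀ i : Fin (N + 3), (i : ℕ) = 0 → z i = a := by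
    intro i hi; simp only [hz]; rw [dif_pos hi]
  have zB : ∀ i : Fin (N + 3), (i : ℕ) = N + 2 → z i = b := by
    intro i hi; simp only [hz]; rw [dif_neg (by omega), dif_pos hi]
  have zX : ∀ (i : Fin (N + 3)) (h1 : (i : ℕ) ≠ 0) (h2 : (i : ℕ) ≠ N + 2),
      z i = x ⟨(i : ℕ) - 1, by have := i.isLt; omega⟩ := by
    intro i h1 h2; simp only [hz]; rw [dif_neg h1, dif_neg h2]
  have zmem : ∀ i, z i ∈ Set.Icc a b := by
    intro i
    rcases eq_or_ne ((i : ℕ)) 0 with h1 | h1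
    · rw [zA i h1]; exact ⟨le_refl a, hab.le⟩
    rcases eq_or_ne ((i : ℕ)) (N + 2) with h2 | h2
    · rw [zB i h2]; exact ⟨hab.le, le_refl b⟩
    · rw [zX i h1 h2]; exact Set.Ioo_subset_Icc_self (hmem _)
  have zzero : ∀ i, h (z i) = 0 := by
    intro i
    rcases eq_or_ne ((i : ℕ)) 0 with h1 | h1
    · rw [zA i h1]; exact ha0
    rcases eq_or_ne ((i : ℕ)) (N + 2) with h2 | h2
    · rw [zB i h2]; exact hb0
    · rw [zX i h1 h2]; exact hzero _
  have zmono : StrictMono z := by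
    rw [Fin.strictMono_iff_lt_succ]
    intro i
    have hi := i.isLt
    have hv1 : ((i.castSucc : Fin (N + 3)) : ℕ) = (i : ℕ) := rfl
    have hv2 : ((i.succ : Fin (N + 3)) : ℕ) = (i : ℕ) + 1 := rfl
    rcases eq_or_ne ((i : ℕ)) 0 with h1 | h1
    · rw [zA i.castSucc (by omega)]
      rw [zX i.succ (by omega) (by omega)]
      exact (hmem _).1
    rcases eq_or_ne ((i : ℕ)) (N + 1) with h2 | h2
    · rw [zX i.castSucc (by omega) (by omega), zB i.succ (by omega)]
      exact (hmem _).2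
    · rw [zX i.castSucc (by omega) (by omega), zX i.succ (by omega) (by omega)]
      apply hmono
      rw [Fin.lt_def]
      simp only [hv1, hv2]
      omega
  exact rolle_tuple hc hd z zmono zmem zzero

private lemma iter_rolle {a b : ℝ} (G : ℕ → ℝ → ℝ) :
    ∀ (N j : ℕ), (∀ k, k < N → ContinuousOn (G (j + k)) (Set.Icc a b)) →
    (∀ k, k < N → ∀ z ∈ Set.Ioo a b, deriv (G (j + k)) z = G (j + k + 1) z) →
    ∀ (x : Fin (N + 1) → ℝ), StrictMono x → (∀ i, x i ∈ Set.Ioo a b) →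
    (∀ i, G j (x i) = 0) →
    ∃ ξ ∈ Set.Ioo a b, G (j + N) ξ = 0 := by
  intro N
  induction N with
  | zero => intro j _ _ x _ hmem hzero; exact ⟨x 0, hmem 0, by simpa using hzero 0⟩
  | succ N IH =>
    intro j hcont hder x hmono hmem hzero
    obtain ⟨y, hymono, hymem, hyzero⟩ :=
      rolle_tuple (h := G j) (h' := G (j + 1))
        (by simpa using hcont 0 (by omega))
        (fun z hz => by simpa using hder 0 (by omega) z hz)
        x hmono (fun i => Set.Ioo_subset_Icc_self (hmem i)) hzero
    obtain ⟨ξ, hξ, hξ0⟩ := IH (j + 1)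
      (fun k hk => by
        have := hcont (k + 1) (by omega)
        rwa [show j + (k + 1) = j + 1 + k by omega] at this)
      (fun k hk => by
        have := hder (k + 1) (by omega)
        rwa [show j + (k + 1) = j + 1 + k by omega] at this)
      y hymono hymem hyzero
    exact ⟨ξ, hξ, by rwa [show j + 1 + N = j + (N + 1) by omega] at hξ0⟩
theorem stmt_0 (a b : ℝ) (hab : a < b) (m : ℕ) (f : ℝ → ℝ)
    (hf : ContDiffOn ℝ (2*m+2 : ℕ) f (Set.Icc a b))
    (P : Polynomial ℝ) (hdeg : P.degree ≤ (2*m+1 : ℕ))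
    (hPa : ∀ j ≤ m, iteratedDeriv j (fun x => P.eval x) a
      = iteratedDerivWithin j f (Set.Icc a b) a)
    (hPb : ∀ j ≤ m, iteratedDeriv j (fun x => P.eval x) b
      = iteratedDerivWithin j f (Set.Icc a b) b) :
    ∀ t ∈ Set.Ioo a b, ∃ ξ ∈ Set.Ioo a b,
      f t - P.eval t =
        iteratedDerivWithin (2*m+2) f (Set.Icc a b) ξ / (Nat.factorial (2*m+2) : ℝ)
          * (t - a) ^ (m+1) * (t - b) ^ (m+1) := by
  intro t ht
  have hs : UniqueDiffOn ℝ (Set.Icc a b) := uniqueDiffOn_Icc hab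
  obtain ⟨hta, htb⟩ := ht
  set W : Polynomial ℝ := ((X - C a) * (X - C b)) ^ (m + 1) with hW
  have hWeval : ∀ x : ℝ, W.eval x = (x - a) ^ (m + 1) * (x - b) ^ (m + 1) := by
    intro x; simp [hW, mul_pow]
  have hwt : W.eval t ≠ 0 := by
    rw [hWeval]
    exact mul_ne_zero (pow_ne_zero _ (sub_ne_zero.2 (ne_of_gt hta)))
      (pow_ne_zero _ (sub_ne_zero.2 (ne_of_lt htb)))
  set K : ℝ := (f t - P.eval t) / W.eval t with hK
  set Q : Polynomial ℝ := P + C K * W with hQ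
  set g : ℝ → ℝ := fun x => f x - Q.eval x with hg
  have hgcd : ContDiffOn ℝ (2*m+2 : ℕ) g (Set.Icc a b) :=
    hf.sub ((contDiff_polyeval Q (2*m+2)).contDiffOn)
  -- iterated derivatives of g
  have hgiter : ∀ (k : ℕ), k ≤ 2*m+2 → ∀ {x : ℝ}, x ∈ Set.Icc a b →
      iteratedDerivWithin k g (Set.Icc a b) x =
        iteratedDerivWithin k f (Set.Icc a b) x - (Polynomial.derivative^[k] Q).eval x := by
    intro k hk x hx
    have hk' : (k : ℕ∞) ≤ (2*m+2 : ℕ) := by exact_mod_cast hk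
    have h1 : iteratedDerivWithin k (f - fun y => Q.eval y) (Set.Icc a b) x =
        iteratedDerivWithin k f (Set.Icc a b) x
          - iteratedDerivWithin k (fun y => Q.eval y) (Set.Icc a b) x :=
      iteratedDerivWithin_sub hx hs
        (ContDiffOn.of_le (m := ((k : ℕ) : WithTop ℕ∞)) hf (by exact_mod_cast hk') x hx)
        ((contDiff_polyeval Q k).contDiffWithinAt)
    have h2 : g = f - fun y => Q.eval y := rfl
    rw [h2, h1, polyIterDerivWithin Q hs k hx]
  -- derivative iterates of Q
  have hQit : ∀ k : ℕ, Polynomial.derivative^[k] Q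
      = Polynomial.derivative^[k] P + C K * Polynomial.derivative^[k] W := by
    intro k
    rw [hQ, iterderiv_add, Polynomial.iterate_derivative_C_mul]
  have hWne : W ≠ 0 := (((monic_X_sub_C a).mul (monic_X_sub_C b)).pow _).ne_zero
  have hWrootA : ∀ j ≤ m, (Polynomial.derivative^[j] W).eval a = 0 := by
    intro j hj
    have hdvd : (X - C a) ^ (m + 1) ∣ W := by
      rw [hW, mul_pow]; exact Dvd.intro _ rfl
    have hmult : m + 1 ≤ W.rootMultiplicity a := (le_rootMultiplicity_iff hWne).2 hdvd
    exact isRoot_iterate_derivative_of_lt_rootMultiplicity (by omega)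
  have hWrootB : ∀ j ≤ m, (Polynomial.derivative^[j] W).eval b = 0 := by
    intro j hj
    have hdvd : (X - C b) ^ (m + 1) ∣ W := by
      rw [hW, mul_pow]; exact Dvd.intro_left _ rfl
    have hmult : m + 1 ≤ W.rootMultiplicity b := (le_rootMultiplicity_iff hWne).2 hdvd
    exact isRoot_iterate_derivative_of_lt_rootMultiplicity (by omega)
  -- endpoint zeros of iterated derivatives of g
  have haI : a ∈ Set.Icc a b := ⟨le_refl a, hab.le⟩
  have hbI : b ∈ Set.Icc a b := ⟨hab.le, le_refl b⟩
  have hga : ∀ k ≤ m, iteratedDerivWithin k g (Set.Icc a b) a = 0 := by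
    intro k hk
    rw [hgiter k (by omega) haI, hQit k, eval_add, eval_mul, eval_C, hWrootA k hk,
      ← polyIterDeriv P k a, hPa k hk]
    ring
  have hgb : ∀ k ≤ m, iteratedDerivWithin k g (Set.Icc a b) b = 0 := by
    intro k hk
    rw [hgiter k (by omega) hbI, hQit k, eval_add, eval_mul, eval_C, hWrootB k hk,
      ← polyIterDeriv P k b, hPb k hk]
    ring
  have hgt : g t = 0 := by
    have : K * W.eval t = f t - P.eval t := div_mul_cancel₀ _ hwt
    simp only [hg, hQ, eval_add, eval_mul, eval_C]
    rw [this]; ring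
  -- continuity and derivative chain
  have hcont : ∀ k, k ≤ 2*m+2 → ContinuousOn (iteratedDerivWithin k g (Set.Icc a b))
      (Set.Icc a b) := fun k hk =>
    hgcd.continuousOn_iteratedDerivWithin (by exact_mod_cast hk) hs
  have hderiv : ∀ k, k < 2*m+2 → ∀ z ∈ Set.Ioo a b,
      deriv (iteratedDerivWithin k g (Set.Icc a b)) z
        = iteratedDerivWithin (k+1) g (Set.Icc a b) z := by
    intro k hk z hz
    have hzs : z ∈ Set.Icc a b := Set.Ioo_subset_Icc_self hz
    rw [iteratedDerivWithin_succ,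
      derivWithin_of_mem_nhds (Icc_mem_nhds hz.1 hz.2)]
  -- phase 1
  have phase1 : ∀ k, k ≤ m+1 → ∃ x : Fin (k+1) → ℝ, StrictMono x ∧
      (∀ i, x i ∈ Set.Ioo a b) ∧ ∀ i, iteratedDerivWithin k g (Set.Icc a b) (x i) = 0 := by
    intro k
    induction k with
    | zero =>
      intro _
      refine ⟨fun _ => t, fun i j hij => ?_, fun _ => ⟨hta, htb⟩,
        ?_⟩
      · have h1 : (i : ℕ) < (j : ℕ) := hij
        have := j.isLt
        omega
      · exact fun _ => by simpa using hgt
    | succ k IH =>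
      intro hk1
      obtain ⟨x, hx1, hx2, hx3⟩ := IH (by omega)
      exact rolle_insert hab (hcont k (by omega)) (hderiv k (by omega))
        x hx1 hx2 hx3 (hga k (by omega)) (hgb k (by omega))
  obtain ⟨x, hx1, hx2, hx3⟩ := phase1 (m+1) le_rfl
  -- phase 2
  obtain ⟨ξ, hξ, hξ0⟩ := iter_rolle (fun k => iteratedDerivWithin k g (Set.Icc a b))
    (m+1) (m+1)
    (fun k hk => hcont (m+1+k) (by omega))
    (fun k hk => hderiv (m+1+k) (by omega))
    x hx1 hx2 hx3
  rw [show m+1+(m+1) = 2*m+2 by omega] at hξ0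
  refine ⟨ξ, hξ, ?_⟩
  have hξs : ξ ∈ Set.Icc a b := Set.Ioo_subset_Icc_self hξ
  -- compute derivative^[2m+2] Q
  have hPzero : Polynomial.derivative^[2*m+2] P = 0 :=
    iterate_derivative_eq_zero (by
      have := natDegree_le_iff_degree_le.2 hdeg
      omega)
  have hWm : W.Monic := ((monic_X_sub_C a).mul (monic_X_sub_C b)).pow _
  have hWdeg : W.natDegree = 2*m+2 := by
    rw [hW, natDegree_pow, natDegree_mul (X_sub_C_ne_zero a) (X_sub_C_ne_zero b),
      natDegree_X_sub_C, natDegree_X_sub_C]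
    ring
  have hWtop : Polynomial.derivative^[2*m+2] W = C ((2*m+2).factorial : ℝ) := by
    ext n
    rw [coeff_iterate_derivative]
    rcases Nat.eq_zero_or_pos n with hn | hn
    · subst hn
      rw [zero_add, Nat.descFactorial_self, coeff_C, if_pos rfl]
      have : W.coeff (2*m+2) = 1 := by
        rw [← hWdeg]; exact hWm.coeff_natDegree
      rw [this, nsmul_eq_mul, mul_one]
    · have h1 : W.coeff (n + (2*m+2)) = 0 :=
        coeff_eq_zero_of_natDegree_lt (by omega)
      rw [h1, coeff_C, if_neg (by omega), smul_zero]
  have hQtop : (Polynomial.derivative^[2*m+2] Q).eval ξ = K * ((2*m+2).factorial : ℝ) := by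
    rw [hQit, hPzero, eval_add, eval_mul, eval_C, hWtop, eval_C, eval_zero, zero_add]
  have hfinal : iteratedDerivWithin (2*m+2) f (Set.Icc a b) ξ
      = K * ((2*m+2).factorial : ℝ) := by
    have := hgiter (2*m+2) le_rfl hξs
    rw [hξ0] at this
    rw [← hQtop]
    linarith [this]
  rw [hfinal]
  have hfac : ((2*m+2).factorial : ℝ) ≠ 0 := by
    exact_mod_cast Nat.factorial_ne_zero _
  rw [mul_div_assoc, div_self hfac, mul_one]
  rw [hK]
  have ha' : (t - a) ^ (m + 1) ≠ 0 := pow_ne_zero _ (sub_ne_zero.2 (ne_of_gt hta))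
  have hb' : (t - b) ^ (m + 1) ≠ 0 := pow_ne_zero _ (sub_ne_zero.2 (ne_of_lt htb))
  rw [hWeval]
  field_simp
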